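/- Let f, g : ℕ → ℝ be nonnegative sequences (indexed by ℓ ≥ 1) with ∑'_{ℓ≥1} f_ℓ = 1 and ∑'_{ℓ≥1} g_ℓ = 1, with finite means μ_X := ∑'_{ℓ≥1} ℓ·f_ℓ < ∞ and μ_Y := ∑'_{ℓ≥1} ℓ·g_ℓ < ∞, and set ϱ := μ_X/(μ_X + μ_Y). Let r, s : ℕ → ℝ satisfy 0 ≤ r_k ≤ 1 and 0 ≤ s_k ≤ 1 for all k ≥ 1, the equations r_k = ∑_{ℓ=1}^{k−1} f_ℓ·s_{k−ℓ} + ∑'_{ℓ≥k} f_ℓ and s_k = ∑_{ℓ=1}^{k−1} g_ℓ·r_{k−ℓ}, and define f̄_ℓ := (∑'_{m≥ℓ} f_m)/μ_X and r^res_k := ∑_{ℓ=1}^{k−1} f̄_ℓ·s_{k−ℓ} + ∑'_{ℓ≥k} f̄_ℓ. Then for every real z with |z| < 1, writing F(z) := ∑'_{ℓ≥1} z^ℓ f_ℓ and G(z) := ∑'_{ℓ≥1} z^ℓ g_ℓ, one has (1 − z)²·μ_X·(1 − F(z)·G(z))·∑'_{k≥1} z^k·(r^res_k − ϱ) = z·(1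 − z)·(1 − ϱ)·μ_X·(1 − F(z)·G(z)) − z²·(1 − G(z))·(1 − F(z)). -/

import Mathlib

open Finset

private lemma tail_summable {a : ℕ → ℝ} (ha : Summable a) (m : ℕ) :
    Summable fun j => a (m + j) :=
  ((summable_nat_add_iff m).mpr ha).congr fun j => by rw [Nat.add_comm]

private lemma summable_norm_geom {z : ℝ} (hz : |z| < 1) {c : ℕ → ℝ} {C : ℝ}
    (hc : ∀ n, |c n| ≤ C) : Summable fun n => ‖z ^ n * c n‖ := by
  refine Summable.of_nonneg_of_le (fun n => norm_nonneg _) (fun n => ?_)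
    ((summable_geometric_of_lt_one (abs_nonneg z) hz).mul_right C)
  rw [norm_mul, norm_pow, Real.norm_eq_abs, Real.norm_eq_abs]
  exact mul_le_mul_of_nonneg_left (hc n) (by positivity)

private lemma summable_geom_succ {z : ℝ} (hz : |z| < 1) {c : ℕ → ℝ} {C : ℝ}
    (hc : ∀ n, |c (n + 1)| ≤ C) : Summable fun n => z ^ (n + 1) * c (n + 1) := by
  have h := ((summable_norm_geom hz (c := fun n => c (n + 1)) hc).of_norm).mul_left z
  exact h.congr fun n => by ring

private lemma conv_pt (z : ℝ) (a b : ℕ → ℝ) (ha0 : a 0 = 0) (hb0 : b 0 = 0) (n : ℕ) :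
    ∑ k ∈ Finset.range (n + 1), z ^ k * a k * (z ^ (n - k) * b (n - k))
      = z ^ n * ∑ k ∈ Finset.Ico 1 n, a k * b (n - k) := by
  rw [Finset.mul_sum]
  rw [← Finset.sum_subset (s₁ := Finset.Ico 1 n) (s₂ := Finset.range (n + 1))
      (fun x hx => by simp only [Finset.mem_Ico] at hx; simp only [Finset.mem_range]; omega)
      (fun x hx hx' => by
        simp only [Finset.mem_range] at hx
        simp only [Finset.mem_Ico] at hx'
        have : x = 0 ∨ x = n := by omega
        rcases this with rfl | rfl
        · simp [ha0]
        · simp [hb0])]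
  refine Finset.sum_congr rfl fun k hk => ?_
  obtain ⟨h1, h2⟩ := Finset.mem_Ico.mp hk
  rw [show z ^ k * a k * (z ^ (n - k) * b (n - k))
      = z ^ k * z ^ (n - k) * (a k * b (n - k)) from by ring, ← pow_add,
    show k + (n - k) = n from by omega]

private lemma conv_hasSum {z : ℝ} {a b : ℕ → ℝ} (ha0 : a 0 = 0) (hb0 : b 0 = 0)
    (hA : Summable fun n => ‖z ^ n * a n‖) (hB : Summable fun n => ‖z ^ n * b n‖) :
    HasSum (fun n => z ^ n * ∑ k ∈ Finset.Ico 1 n, a k * b (n - k))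
      ((∑' n, z ^ n * a n) * (∑' n, z ^ n * b n)) := by
  have h := hasSum_sum_range_mul_of_summable_norm hA hB
  simpa only [conv_pt z a b ha0 hb0] using h

private lemma sum_tails {f : ℕ → ℝ} (hpos : ∀ n, 0 ≤ f n) (hsum : Summable f)
    (hmean : Summable fun n : ℕ => (n : ℝ) * f n) :
    Summable (fun k : ℕ => ∑' j : ℕ, f (k + 1 + j)) ∧
      ∑' k : ℕ, ∑' j : ℕ, f (k + 1 + j) = ∑' n : ℕ, (n : ℝ) * f n := by
  classical
  set F : ℕ → ENNReal := fun n => ENNReal.ofReal (f n) with hF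
  have htail : ∀ m, Summable fun j => f (m + j) := tail_summable hsum
  have step1 : ∀ k : ℕ, (∑' j, F (k + 1 + j)) = ENNReal.ofReal (∑' j, f (k + 1 + j)) :=
    fun k => (ENNReal.ofReal_tsum_of_nonneg (fun j => hpos (k + 1 + j)) (htail (k + 1))).symm
  have step2 : ∀ k : ℕ, (∑' j, F (k + 1 + j))
      = ∑' m, (if k + 1 ≤ m then F m else 0) := by
    intro k
    have hinj : Function.Injective (fun j : ℕ => k + 1 + j) := fun x y h => by
      simpa using h
    have hsupp : Function.support (fun m => if k + 1 ≤ m then F m else 0)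
        ⊆ Set.range (fun j : ℕ => k + 1 + j) := by
      intro m hm
      simp only [Function.mem_support, ne_eq, ite_eq_right_iff, not_forall] at hm
      obtain ⟨hkm, -⟩ := hm
      exact ⟨m - (k + 1), by show k + 1 + (m - (k + 1)) = m; omega⟩
    have h := hinj.tsum_eq hsupp
    rw [← h]
    exact tsum_congr fun j => by simp [Nat.le_add_right]
  have step4 : ∀ m : ℕ, (∑' k : ℕ, (if k + 1 ≤ m then F m else 0)) = (m : ENNReal) * F m := by
    intro m
    rw [tsum_eq_sum (s := Finset.range m) (fun k hk => by
      rw [if_neg]; simp only [Finset.mem_range] at hk; omega)]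
    rw [Finset.sum_congr rfl (fun k hk => if_pos (by simp only [Finset.mem_range] at hk; omega)),
      Finset.sum_const, Finset.card_range, nsmul_eq_mul]
  have key : (∑' k : ℕ, ENNReal.ofReal (∑' j : ℕ, f (k + 1 + j)))
      = ENNReal.ofReal (∑' n : ℕ, (n : ℝ) * f n) := by
    calc (∑' k : ℕ, ENNReal.ofReal (∑' j : ℕ, f (k + 1 + j)))
        = ∑' k : ℕ, ∑' j, F (k + 1 + j) := tsum_congr fun k => (step1 k).symm
      _ = ∑' k : ℕ, ∑' m, (if k + 1 ≤ m then F m else 0) := tsum_congr step2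
      _ = ∑' m : ℕ, ∑' k : ℕ, (if k + 1 ≤ m then F m else 0) := ENNReal.tsum_comm
      _ = ∑' m : ℕ, (m : ENNReal) * F m := tsum_congr step4
      _ = ∑' m : ℕ, ENNReal.ofReal ((m : ℝ) * f m) := tsum_congr fun m => by
          rw [ENNReal.ofReal_mul (Nat.cast_nonneg m), ENNReal.ofReal_natCast]
      _ = ENNReal.ofReal (∑' n : ℕ, (n : ℝ) * f n) :=
          (ENNReal.ofReal_tsum_of_nonneg (fun n => mul_nonneg (Nat.cast_nonneg n) (hpos n)) hmean).symm
  have hnn : ∀ k : ℕ, 0 ≤ ∑' j : ℕ, f (k + 1 + j) := fun k => tsum_nonneg fun j => hpos _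
  have hsummT : Summable (fun k : ℕ => ∑' j : ℕ, f (k + 1 + j)) := by
    have hfin : (∑' k : ℕ, ENNReal.ofReal (∑' j : ℕ, f (k + 1 + j))) ≠ ⊤ := by
      rw [key]; exact ENNReal.ofReal_ne_top
    have h := ENNReal.summable_toReal hfin
    exact h.congr fun k => ENNReal.toReal_ofReal (hnn k)
  refine ⟨hsummT, ?_⟩
  have h2 := ENNReal.ofReal_tsum_of_nonneg hnn hsummT
  rw [key] at h2
  have hmnn : 0 ≤ ∑' n : ℕ, (n : ℝ) * f n := tsum_nonneg fun n => mul_nonneg (Nat.cast_nonneg n) (hpos n)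
  exact (ENNReal.ofReal_eq_ofReal_iff (tsum_nonneg hnn) hmnn).mp h2

private lemma telescope {z : ℝ} {a : ℕ → ℝ} (ha : Summable a)
    (hU : Summable fun k : ℕ => z ^ (k + 1) * (∑' j : ℕ, a (k + 1 + j)))
    (hA : Summable fun k : ℕ => z ^ (k + 1) * a (k + 1)) :
    (1 - z) * ∑' k : ℕ, z ^ (k + 1) * (∑' j : ℕ, a (k + 1 + j))
      = z * (∑' j : ℕ, a (1 + j)) - z * ∑' k : ℕ, z ^ (k + 1) * a (k + 1) := by
  have htail : ∀ m, Summable fun j => a (m + j) := tail_summable ha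
  set T : ℕ → ℝ := fun m => ∑' j, a (m + j) with hT
  have hstep : ∀ k : ℕ, T (k + 1) = a (k + 1) + T (k + 2) := by
    intro k
    have h0 := Summable.tsum_eq_zero_add (htail (k + 1))
    simp only [hT]
    rw [h0, Nat.add_zero]
    congr 1
    exact tsum_congr fun j => by congr 1; omega
  have hUs : (∑' k : ℕ, z ^ (k + 1) * T (k + 1))
      = z * T 1 + ∑' k : ℕ, z ^ (k + 2) * T (k + 2) := by
    rw [Summable.tsum_eq_zero_add hU]
    norm_num
    rfl
  have hzU : z * (∑' k : ℕ, z ^ (k + 1) * T (k + 1)) = ∑' k : ℕ, z ^ (k + 2) * T (k + 1) := by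
    rw [← tsum_mul_left]
    exact tsum_congr fun k => by ring
  have h1 : Summable fun k : ℕ => z ^ (k + 2) * T (k + 2) := (summable_nat_add_iff 1).mpr hU
  have h2 : Summable fun k : ℕ => z ^ (k + 2) * T (k + 1) :=
    (hU.mul_left z).congr fun k => by ring
  have hsub : (∑' k : ℕ, z ^ (k + 2) * T (k + 2)) - ∑' k : ℕ, z ^ (k + 2) * T (k + 1)
      = -(z * ∑' k : ℕ, z ^ (k + 1) * a (k + 1)) := by
    rw [← Summable.tsum_sub h1 h2]
    have : ∀ k : ℕ, z ^ (k + 2) * T (k + 2) - z ^ (k + 2) * T (k + 1)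
        = -(z * (z ^ (k + 1) * a (k + 1))) := fun k => by rw [hstep k]; ring
    rw [tsum_congr this, tsum_neg, tsum_mul_left]
  have : (1 - z) * ∑' k : ℕ, z ^ (k + 1) * T (k + 1)
      = z * T 1 - z * ∑' k : ℕ, z ^ (k + 1) * a (k + 1) := by
    have e := hUs
    nlinarith [hzU, hsub, e]
  exact this

theorem stmt_15 (f g : ℕ → ℝ) (hf0 : f 0 = 0) (hg0 : g 0 = 0)
    (hfpos : ∀ ℓ, 0 ≤ f ℓ) (hgpos : ∀ ℓ, 0 ≤ g ℓ)
    (hfsum : Summable f) (hgsum : Summable g)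
    (hftot : ∑' ℓ : ℕ, f ℓ = 1) (hgtot : ∑' ℓ : ℕ, g ℓ = 1)
    (hfmean : Summable (fun ℓ : ℕ => (ℓ : ℝ) * f ℓ))
    (hgmean : Summable (fun ℓ : ℕ => (ℓ : ℝ) * g ℓ))
    (μX μY ϱ : ℝ) (hμX : μX = ∑' ℓ : ℕ, (ℓ : ℝ) * f ℓ)
    (hμY : μY = ∑' ℓ : ℕ, (ℓ : ℝ) * g ℓ) (hϱ : ϱ = μX / (μX + μY))
    (r s : ℕ → ℝ)
    (hr01 : ∀ k, 1 ≤ k → 0 ≤ r k ∧ r k ≤ 1)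
    (hs01 : ∀ k, 1 ≤ k → 0 ≤ s k ∧ s k ≤ 1)
    (hr : ∀ k, 1 ≤ k →
      r k = (∑ ℓ ∈ Finset.Ico 1 k, f ℓ * s (k - ℓ)) + ∑' j : ℕ, f (k + j))
    (hs : ∀ k, 1 ≤ k →
      s k = ∑ ℓ ∈ Finset.Ico 1 k, g ℓ * r (k - ℓ))
    (fbar rres : ℕ → ℝ)
    (hfbar : ∀ ℓ, fbar ℓ = (∑' j : ℕ, f (ℓ + j)) / μX)
    (hrres : ∀ k, 1 ≤ k →
      rres k = (∑ ℓ ∈ Finset.Ico 1 k, fbar ℓ * s (k - ℓ)) + ∑' j : ℕ, fbar (k + j))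
    (z : ℝ) (hz : |z| < 1) :
    (1 - z) ^ 2 * μX *
        (1 - (∑' ℓ : ℕ, z ^ ℓ * f ℓ) * (∑' ℓ : ℕ, z ^ ℓ * g ℓ)) *
        (∑' k : ℕ, z ^ (k + 1) * (rres (k + 1) - ϱ))
      = z * (1 - z) * (1 - ϱ) * μX *
          (1 - (∑' ℓ : ℕ, z ^ ℓ * f ℓ) * (∑' ℓ : ℕ, z ^ ℓ * g ℓ))
        - z ^ 2 * (1 - ∑' ℓ : ℕ, z ^ ℓ * g ℓ) * (1 - ∑' ℓ : ℕ, z ^ ℓ * f ℓ) := by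
  classical
  have hμX1 : (1 : ℝ) ≤ μX := by
    rw [hμX, ← hftot]
    refine Summable.tsum_le_tsum (fun n => ?_) hfsum hfmean
    rcases n with _ | n
    · simp [hf0]
    · exact le_mul_of_one_le_left (hfpos _)
        (by exact_mod_cast Nat.succ_le_succ (Nat.zero_le n))
  have hμpos : (0 : ℝ) < μX := lt_of_lt_of_le one_pos hμX1
  have hμne : μX ≠ 0 := ne_of_gt hμpos
  have h1z : (1 : ℝ) - z ≠ 0 := by
    have := abs_lt.mp hz
    intro hcon; linarith
  have hf1 : ∀ n, |f n| ≤ 1 := fun n => by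
    rw [abs_of_nonneg (hfpos n), ← hftot]
    exact Summable.le_tsum hfsum n fun j _ => hfpos j
  have hg1 : ∀ n, |g n| ≤ 1 := fun n => by
    rw [abs_of_nonneg (hgpos n), ← hgtot]
    exact Summable.le_tsum hgsum n fun j _ => hgpos j
  have hTfnn : ∀ k : ℕ, 0 ≤ ∑' j : ℕ, f (k + j) := fun k => tsum_nonneg fun j => hfpos _
  have hTf1 : ∀ k : ℕ, (∑' j : ℕ, f (k + j)) ≤ 1 := by
    intro k
    rw [← hftot]
    exact Summable.tsum_le_tsum_of_inj (fun j => k + j) (fun x y h => by simpa using h)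
      (fun c _ => hfpos c) (fun j => le_of_eq rfl) (tail_summable hfsum k) hfsum
  obtain ⟨hTsumm, hTval⟩ := sum_tails hfpos hfsum hfmean
  have hTval' : (∑' k : ℕ, ∑' j : ℕ, f (k + 1 + j)) = μX := by rw [hμX]; exact hTval
  have hfbarnn : ∀ ℓ, 0 ≤ fbar ℓ := fun ℓ => by
    rw [hfbar ℓ]; exact div_nonneg (hTfnn ℓ) hμpos.le
  have hfbar1 : ∀ ℓ, |fbar ℓ| ≤ 1 := fun ℓ => by
    rw [abs_of_nonneg (hfbarnn ℓ), hfbar ℓ, div_le_one hμpos]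
    exact le_trans (hTf1 ℓ) hμX1
  have hfbarsum : Summable fbar := by
    have hTfsum : Summable (fun k : ℕ => ∑' j : ℕ, f (k + j)) := by
      exact (summable_nat_add_iff 1).mp hTsumm
    exact (hTfsum.div_const μX).congr fun ℓ => (hfbar ℓ).symm
  have hTbnn : ∀ k : ℕ, 0 ≤ ∑' j : ℕ, fbar (k + j) := fun k => tsum_nonneg fun j => hfbarnn _
  set CB : ℝ := ∑' ℓ : ℕ, fbar ℓ with hCBdef
  have hCBnn : 0 ≤ CB := tsum_nonneg fun ℓ => hfbarnn ℓ
  have hTble : ∀ k : ℕ, (∑' j : ℕ, fbar (k + j)) ≤ CB := by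
    intro k
    exact Summable.tsum_le_tsum_of_inj (fun j => k + j) (fun x y h => by simpa using h)
      (fun c _ => hfbarnn c) (fun j => le_of_eq rfl) (tail_summable hfbarsum k) hfbarsum
  have hTb1 : (∑' j : ℕ, fbar (1 + j)) = 1 := by
    have e1 : (∑' j : ℕ, fbar (1 + j)) = ∑' j : ℕ, (∑' i : ℕ, f (j + 1 + i)) / μX := by
      refine tsum_congr fun j => ?_
      rw [hfbar (1 + j)]
      congr 1
      exact tsum_congr fun i => by congr 1; omega
    rw [e1, tsum_div_const, hTval', div_self hμne]
  set r' : ℕ → ℝ := fun n => if n = 0 then 0 else r n with hr'def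
  set s' : ℕ → ℝ := fun n => if n = 0 then 0 else s n with hs'def
  set fb' : ℕ → ℝ := fun n => if n = 0 then 0 else fbar n with hfb'def
  set rr' : ℕ → ℝ := fun n => if n = 0 then 0 else rres n with hrr'def
  set T' : ℕ → ℝ := fun n => if n = 0 then 0 else ∑' j : ℕ, f (n + j) with hT'def
  set Tb' : ℕ → ℝ := fun n => if n = 0 then 0 else ∑' j : ℕ, fbar (n + j) with hTb'def
  have hr'0 : r' 0 = 0 := by simp [hr'def]
  have hs'0 : s' 0 = 0 := by simp [hs'def]
  have hfb'0 : fb' 0 = 0 := by simp [hfb'def]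
  have hr'1 : ∀ n, |r' n| ≤ 1 := by
    intro n
    rcases n with _ | m
    · simp [hr'def]
    · simp only [hr'def, Nat.succ_ne_zero, if_false]
      obtain ⟨h1, h2⟩ := hr01 (m + 1) (by omega)
      rw [abs_le]; constructor <;> linarith
  have hs'1 : ∀ n, |s' n| ≤ 1 := by
    intro n
    rcases n with _ | m
    · simp [hs'def]
    · simp only [hs'def, Nat.succ_ne_zero, if_false]
      obtain ⟨h1, h2⟩ := hs01 (m + 1) (by omega)
      rw [abs_le]; constructor <;> linarith
  have hfb'1 : ∀ n, |fb' n| ≤ 1 := by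
    intro n
    rcases n with _ | m
    · simp [hfb'def]
    · simp only [hfb'def, Nat.succ_ne_zero, if_false]; exact hfbar1 _
  have hT'1 : ∀ n, |T' n| ≤ 1 := by
    intro n
    rcases n with _ | m
    · simp [hT'def]
    · simp only [hT'def, Nat.succ_ne_zero, if_false]
      rw [abs_of_nonneg (hTfnn _)]; exact hTf1 _
  have hTb'1 : ∀ n, |Tb' n| ≤ CB := by
    intro n
    rcases n with _ | m
    · simp [hTb'def, hCBnn]
    · simp only [hTb'def, Nat.succ_ne_zero, if_false]
      rw [abs_of_nonneg (hTbnn _)]; exact hTble _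
  have hrresbd : ∀ m : ℕ, |rres (m + 1)| ≤ CB + CB := by
    intro m
    have hconvnn : 0 ≤ ∑ ℓ ∈ Finset.Ico 1 (m + 1), fbar ℓ * s (m + 1 - ℓ) := by
      refine Finset.sum_nonneg fun ℓ hℓ => ?_
      obtain ⟨h1, h2⟩ := Finset.mem_Ico.mp hℓ
      exact mul_nonneg (hfbarnn ℓ) (hs01 (m + 1 - ℓ) (by omega)).1
    have hconvle : (∑ ℓ ∈ Finset.Ico 1 (m + 1), fbar ℓ * s (m + 1 - ℓ)) ≤ CB := by
      calc (∑ ℓ ∈ Finset.Ico 1 (m + 1), fbar ℓ * s (m + 1 - ℓ))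
          ≤ ∑ ℓ ∈ Finset.Ico 1 (m + 1), fbar ℓ := by
            refine Finset.sum_le_sum fun ℓ hℓ => ?_
            obtain ⟨h1, h2⟩ := Finset.mem_Ico.mp hℓ
            exact mul_le_of_le_one_right (hfbarnn ℓ) (hs01 (m + 1 - ℓ) (by omega)).2
        _ ≤ CB := Summable.sum_le_tsum _ (fun ℓ _ => hfbarnn ℓ) hfbarsum
    rw [hrres (m + 1) (by omega),
      abs_of_nonneg (add_nonneg hconvnn (hTbnn (m + 1)))]
    exact add_le_add hconvle (hTble (m + 1))
  -- norm summabilities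
  have hAf : Summable fun n => ‖z ^ n * f n‖ := summable_norm_geom hz hf1
  have hAg : Summable fun n => ‖z ^ n * g n‖ := summable_norm_geom hz hg1
  have hAr : Summable fun n => ‖z ^ n * r' n‖ := summable_norm_geom hz hr'1
  have hAs : Summable fun n => ‖z ^ n * s' n‖ := summable_norm_geom hz hs'1
  have hAfb : Summable fun n => ‖z ^ n * fb' n‖ := summable_norm_geom hz hfb'1
  have hAT : Summable fun n => ‖z ^ n * T' n‖ := summable_norm_geom hz hT'1
  have hATb : Summable fun n => ‖z ^ n * Tb' n‖ := summable_norm_geom hz hTb'1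
  have hArr : Summable fun n => ‖z ^ n * rr' n‖ := by
    refine summable_norm_geom hz (C := CB + CB) ?_
    intro n
    rcases n with _ | m
    · have h0 : |rr' 0| = 0 := by simp [hrr'def]
      rw [h0]; linarith
    · simp only [hrr'def, Nat.succ_ne_zero, if_false]; exact hrresbd m
  -- series abbreviations
  set F := ∑' ℓ : ℕ, z ^ ℓ * f ℓ with hFdef
  set G := ∑' ℓ : ℕ, z ^ ℓ * g ℓ with hGdef
  set P := ∑' k : ℕ, z ^ (k + 1) * (rres (k + 1) - ϱ) with hPdef
  set R0 := ∑' n : ℕ, z ^ n * r' n with hR0def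
  set S0 := ∑' n : ℕ, z ^ n * s' n with hS0def
  set U0 := ∑' n : ℕ, z ^ n * T' n with hU0def
  set Ub0 := ∑' n : ℕ, z ^ n * Tb' n with hUb0def
  set Fb0 := ∑' n : ℕ, z ^ n * fb' n with hFb0def
  set Rr0 := ∑' n : ℕ, z ^ n * rr' n with hRr0def
  have hshift : ∀ (c : ℕ → ℝ), Summable (fun n : ℕ => z ^ n * c n) → c 0 = 0 →
      (∑' n : ℕ, z ^ n * c n) = ∑' k : ℕ, z ^ (k + 1) * c (k + 1) := by
    intro c hc hc0
    rw [Summable.tsum_eq_zero_add hc, hc0]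
    simp
  -- e1 : S0 = G * R0
  have hc1 : (fun n : ℕ => z ^ n * ∑ k ∈ Finset.Ico 1 n, g k * r' (n - k))
      = fun n : ℕ => z ^ n * s' n := by
    funext n
    congr 1
    rcases n with _ | m
    · simp [hs'def]
    · have hs'eq : s' (m + 1) = s (m + 1) := by simp [hs'def]
      rw [hs'eq, hs (m + 1) (by omega)]
      refine Finset.sum_congr rfl fun k hk => ?_
      obtain ⟨h1, h2⟩ := Finset.mem_Ico.mp hk
      congr 1
      simp only [hr'def]
      rw [if_neg (by omega)]
  have hSsum := conv_hasSum hg0 hr'0 hAg hAr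
  rw [hc1] at hSsum
  have e1 : S0 = G * R0 := by
    rw [hS0def, hGdef, hR0def]; exact hSsum.tsum_eq
  -- e2 : R0 = F * S0 + U0
  have hc2 : (fun n : ℕ => z ^ n * ∑ k ∈ Finset.Ico 1 n, f k * s' (n - k))
      = fun n : ℕ => z ^ n * (r' n - T' n) := by
    funext n
    congr 1
    rcases n with _ | m
    · simp [hr'def, hT'def]
    · have hreq : r' (m + 1) = r (m + 1) := by simp [hr'def]
      have hTeq : T' (m + 1) = ∑' j : ℕ, f (m + 1 + j) := by
        simp [hT'def]
      rw [hreq, hTeq, hr (m + 1) (by omega), add_sub_cancel_right]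
      refine Finset.sum_congr rfl fun k hk => ?_
      obtain ⟨h1, h2⟩ := Finset.mem_Ico.mp hk
      congr 1
      simp only [hs'def]
      rw [if_neg (by omega)]
  have hRconv := conv_hasSum hf0 hs'0 hAf hAs
  rw [hc2] at hRconv
  have e2 : R0 = F * S0 + U0 := by
    have h2 := hRconv.tsum_eq
    have hsplit : (∑' n : ℕ, z ^ n * (r' n - T' n))
        = (∑' n : ℕ, z ^ n * r' n) - ∑' n : ℕ, z ^ n * T' n := by
      rw [← Summable.tsum_sub hAr.of_norm hAT.of_norm]
      exact tsum_congr fun n => by ring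
    rw [hsplit] at h2
    rw [hR0def, hFdef, hS0def, hU0def]
    linarith [h2]
  -- e3 : Rr0 = Fb0 * S0 + Ub0
  have hc3 : (fun n : ℕ => z ^ n * ∑ k ∈ Finset.Ico 1 n, fb' k * s' (n - k))
      = fun n : ℕ => z ^ n * (rr' n - Tb' n) := by
    funext n
    congr 1
    rcases n with _ | m
    · simp [hrr'def, hTb'def]
    · have h1 : rr' (m + 1) = rres (m + 1) := by simp [hrr'def]
      have h2 : Tb' (m + 1) = ∑' j : ℕ, fbar (m + 1 + j) := by
        simp [hTb'def]
      rw [h1, h2, hrres (m + 1) (by omega), add_sub_cancel_right]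
      refine Finset.sum_congr rfl fun k hk => ?_
      obtain ⟨hk1, hk2⟩ := Finset.mem_Ico.mp hk
      simp only [hfb'def, hs'def]
      rw [if_neg (by omega), if_neg (by omega)]
  have hRrconv := conv_hasSum hfb'0 hs'0 hAfb hAs
  rw [hc3] at hRrconv
  have e3 : Rr0 = Fb0 * S0 + Ub0 := by
    have h3 := hRrconv.tsum_eq
    have hsplit : (∑' n : ℕ, z ^ n * (rr' n - Tb' n))
        = (∑' n : ℕ, z ^ n * rr' n) - ∑' n : ℕ, z ^ n * Tb' n := by
      rw [← Summable.tsum_sub hArr.of_norm hATb.of_norm]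
      exact tsum_congr fun n => by ring
    rw [hsplit] at h3
    rw [hRr0def, hFb0def, hS0def, hUb0def]
    linarith [h3]
  -- e4 : (1 - z) * U0 = z - z * F
  have hUsucc : Summable fun k : ℕ => z ^ (k + 1) * ∑' j : ℕ, f (k + 1 + j) := by
    have h := summable_geom_succ hz (C := 1) (c := fun k => ∑' j : ℕ, f (k + j))
      (fun n => by rw [abs_of_nonneg (hTfnn _)]; exact hTf1 _)
    exact h
  have hfsucc : Summable fun k : ℕ => z ^ (k + 1) * f (k + 1) :=
    summable_geom_succ hz (fun n => hf1 (n + 1))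
  have htelf := telescope hfsum hUsucc hfsucc
  have hU0eq : U0 = ∑' k : ℕ, z ^ (k + 1) * ∑' j : ℕ, f (k + 1 + j) := by
    rw [hU0def, hshift T' hAT.of_norm (by simp [hT'def])]
    exact tsum_congr fun k => by simp [hT'def]
  have hFeq : F = ∑' k : ℕ, z ^ (k + 1) * f (k + 1) := by
    rw [hFdef, hshift f hAf.of_norm hf0]
  have hTf1tot : (∑' j : ℕ, f (1 + j)) = 1 := by
    have h0 := Summable.tsum_eq_zero_add hfsum
    rw [hf0, zero_add] at h0
    rw [← hftot, h0]
    exact tsum_congr fun j => by congr 1; omega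
  have e4 : (1 - z) * U0 = z - z * F := by
    rw [hU0eq, htelf, hTf1tot, ← hFeq]; ring
  -- e5 : (1 - z) * Ub0 = z - z * Fb0
  have hUbsucc : Summable fun k : ℕ => z ^ (k + 1) * ∑' j : ℕ, fbar (k + 1 + j) := by
    have h := summable_geom_succ hz (C := CB) (c := fun k => ∑' j : ℕ, fbar (k + j))
      (fun n => by rw [abs_of_nonneg (hTbnn _)]; exact hTble _)
    exact h
  have hfbsucc : Summable fun k : ℕ => z ^ (k + 1) * fbar (k + 1) :=
    summable_geom_succ hz (fun n => hfbar1 (n + 1))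
  have htelb := telescope hfbarsum hUbsucc hfbsucc
  have hUb0eq : Ub0 = ∑' k : ℕ, z ^ (k + 1) * ∑' j : ℕ, fbar (k + 1 + j) := by
    rw [hUb0def, hshift Tb' hATb.of_norm (by simp [hTb'def])]
    exact tsum_congr fun k => by simp [hTb'def]
  have hFb0eq : Fb0 = ∑' k : ℕ, z ^ (k + 1) * fbar (k + 1) := by
    rw [hFb0def, hshift fb' hAfb.of_norm hfb'0]
    exact tsum_congr fun k => by simp [hfb'def]
  have e5 : (1 - z) * Ub0 = z - z * Fb0 := by
    rw [hUb0eq, htelb, hTb1, ← hFb0eq]; ring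
  -- eFb : μX * Fb0 = U0
  have eFb : μX * Fb0 = U0 := by
    rw [hFb0eq, hU0eq, ← tsum_mul_left]
    refine tsum_congr fun k => ?_
    rw [hfbar (k + 1)]
    field_simp
  -- e6 : (1 - z) * P = (1 - z) * Rr0 - ϱ * z
  have hRrsucc : Summable fun k : ℕ => z ^ (k + 1) * rres (k + 1) :=
    summable_geom_succ hz (fun n => hrresbd n)
  have hϱsucc : Summable fun k : ℕ => z ^ (k + 1) * ϱ :=
    summable_geom_succ hz (c := fun _ => ϱ) (fun n => le_refl |ϱ|)
  have hRr0eq : Rr0 = ∑' k : ℕ, z ^ (k + 1) * rres (k + 1) := by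
    rw [hRr0def, hshift rr' hArr.of_norm (by simp [hrr'def])]
    exact tsum_congr fun k => by simp [hrr'def]
  have hgeosum : (∑' k : ℕ, z ^ (k + 1) * ϱ) = z * ϱ * (1 - z)⁻¹ := by
    have h1 : (∑' k : ℕ, z ^ (k + 1) * ϱ) = ∑' k : ℕ, z * ϱ * z ^ k :=
      tsum_congr fun k => by ring
    rw [h1, tsum_mul_left, tsum_geometric_of_norm_lt_one (by rwa [Real.norm_eq_abs])]
  have e6 : (1 - z) * P = (1 - z) * Rr0 - ϱ * z := by
    have hPeq : P = Rr0 - z * ϱ * (1 - z)⁻¹ := by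
      rw [hPdef, hRr0eq, ← hgeosum, ← Summable.tsum_sub hRrsucc hϱsucc]
      exact tsum_congr fun k => by ring
    rw [hPeq]
    field_simp
  -- eR : (1 - F * G) * R0 = U0
  have eR : (1 - F * G) * R0 = U0 := by linear_combination e2 + F * e1
  -- final algebra
  linear_combination ((1 - z) * μX * (1 - F * G)) * e6
    + ((1 - z) ^ 2 * μX * (1 - F * G)) * e3
    + ((1 - z) ^ 2 * (1 - F * G) * S0 - z * (1 - z) * (1 - F * G)) * eFb
    + ((1 - z) * (1 - F * G) * μX) * e5
    + ((1 - z) ^ 2 * (1 - F * G) * U0) * e1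
    + ((1 - z) ^ 2 * G * U0) * eR
    + (G * ((1 - z) * U0 + z * (1 - F)) - z * (1 - F * G)) * e4
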